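/- Under the same notation, the loss of quantum Fisher information F(ρ_θ) − F(𝒩(ρ_θ)) equals ∑_j ‖(𝓛_θ E_j − E_j L_θ)√ρ_θ‖²_HS, and hence F(ρ_θ) ≥ F(𝒩(ρ_θ)) with equality if and only if 𝓛_θ E_j √ρ_θ = E_j L_θ √ρ_θ for all j. -/

import Mathlib

open Matrix
open scoped ComplexOrder

/-- The positive semidefinite square root of a positive semidefinite matrix
(the definition `Matrix.PosSemidef.sqrt` of Mathlib of December 2024, since removed). -/
noncomputable def Matrix.PosSemidef.sqrt {m : Type*} [Fintype m] [DecidableEq m]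
    {𝕜 : Type*} [RCLike 𝕜] {A : Matrix m m 𝕜} (hA : A.PosSemidef) : Matrix m m 𝕜 :=
  hA.1.eigenvectorUnitary.1 * diagonal ((↑) ∘ (fun x : ℝ => Real.sqrt x) ∘ hA.1.eigenvalues) *
  (star hA.1.eigenvectorUnitary : Matrix m m 𝕜)

lemma Matrix.PosSemidef.sqrt_mul_self {m : Type*} [Fintype m] [DecidableEq m]
    {𝕜 : Type*} [RCLike 𝕜] {A : Matrix m m 𝕜} (hA : A.PosSemidef) :
    hA.sqrt * hA.sqrt = A := by
  have hU : (star hA.1.eigenvectorUnitary : Matrix m m 𝕜) * hA.1.eigenvectorUnitary.1 = 1 :=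
    Unitary.coe_star_mul_self _
  conv_rhs => rw [hA.1.spectral_theorem, Unitary.conjStarAlgAut_apply]
  unfold Matrix.PosSemidef.sqrt
  rw [show ∀ a b c d e : Matrix m m 𝕜, a * b * c * (d * e * c) = a * b * (c * d) * e * c by
    intro a b c d e; simp only [mul_assoc], hU, mul_one]
  rw [mul_assoc _ (diagonal _) (diagonal _), diagonal_mul_diagonal]
  congr 3
  funext i
  simp only [Function.comp_apply, ← RCLike.ofReal_mul, Real.mul_self_sqrt (hA.eigenvalues_nonneg i)]

lemma Matrix.PosSemidef.posSemidef_sqrt {m : Type*} [Fintype m] [DecidableEq m]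
    {𝕜 : Type*} [RCLike 𝕜] {A : Matrix m m 𝕜} (hA : A.PosSemidef) :
    hA.sqrt.PosSemidef := by
  unfold Matrix.PosSemidef.sqrt
  have hD : (diagonal ((↑) ∘ (fun x : ℝ => Real.sqrt x) ∘ hA.1.eigenvalues) : Matrix m m 𝕜).PosSemidef :=
    posSemidef_diagonal_iff.2 fun i => by
      simp only [Function.comp_apply]; exact_mod_cast Real.sqrt_nonneg _
  have := hD.mul_mul_conjTranspose_same (hA.1.eigenvectorUnitary : Matrix m m 𝕜)
  simpa [Unitary.coe_star, star_eq_conjTranspose] using this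

/-- The loss of QFI equals `∑_j ‖(𝓛 E_j − E_j L)√ρ‖²_HS`; hence `F(ρ) ≥ F(𝒩(ρ))`
with equality iff `𝓛 E_j √ρ = E_j L √ρ` for all `j`. -/
theorem qfi_loss_eq_and_monotone
    {n : ℕ} {ι : Type*} [Fintype ι]
    (ρ L 𝓛 : Matrix (Fin n) (Fin n) ℂ) (hρ : ρ.PosSemidef)
    (hρtr : ρ.trace = 1) (hL : L.IsHermitian) (h𝓛 : 𝓛.IsHermitian)
    (E : ι → Matrix (Fin n) (Fin n) ℂ)
    (hKraus : ∑ j, (E j)ᴴ * E j = 1)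
    (hSLDout : ∑ j, E j * (L * ρ + ρ * L) * (E j)ᴴ
      = 𝓛 * (∑ j, E j * ρ * (E j)ᴴ) + (∑ j, E j * ρ * (E j)ᴴ) * 𝓛) :
    (ρ * L ^ 2).trace - ((∑ j, E j * ρ * (E j)ᴴ) * 𝓛 ^ 2).trace
        = ∑ j, (((𝓛 * E j - E j * L) * hρ.sqrt)ᴴ * ((𝓛 * E j - E j * L) * hρ.sqrt)).trace
      ∧ ((∑ j, E j * ρ * (E j)ᴴ) * 𝓛 ^ 2).trace.re ≤ (ρ * L ^ 2).trace.re
      ∧ ((ρ * L ^ 2).trace.re = ((∑ j, E j * ρ * (E j)ᴴ) * 𝓛 ^ 2).trace.re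
          ↔ ∀ j, 𝓛 * E j * hρ.sqrt = E j * L * hρ.sqrt) := by
  set S := hρ.sqrt with hSdef
  have hS : S * S = ρ := hρ.sqrt_mul_self
  have hSH : Sᴴ = S := hρ.posSemidef_sqrt.isHermitian
  set σ := ∑ j, E j * ρ * (E j)ᴴ with hσ
  have hval : ∀ Y : Matrix (Fin n) (Fin n) ℂ,
      (Yᴴ * Y).trace = ((∑ i, ∑ k, Complex.normSq (Y k i) : ℝ) : ℂ) := by
    intro Y
    simp [Matrix.trace, Matrix.mul_apply, Matrix.diag, Complex.normSq_eq_conj_mul_self]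
  -- key per-j identity
  have key : ∀ j, (((𝓛 * E j - E j * L) * S)ᴴ * ((𝓛 * E j - E j * L) * S)).trace
      = ((𝓛 * 𝓛 * (E j * ρ * (E j)ᴴ)).trace
        - (𝓛 * (E j * (ρ * L) * (E j)ᴴ)).trace
        - (𝓛 * (E j * (L * ρ) * (E j)ᴴ)).trace)
        + ((E j)ᴴ * E j * (L * (ρ * L))).trace := by
    intro j
    have h1 : (((𝓛 * E j - E j * L) * S)ᴴ * ((𝓛 * E j - E j * L) * S)).trace
        = ((𝓛 * E j - E j * L) * ρ * ((E j)ᴴ * 𝓛 - L * (E j)ᴴ)).trace := by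
      rw [conjTranspose_mul, conjTranspose_sub, conjTranspose_mul, conjTranspose_mul,
        h𝓛.eq, hL.eq, hSH, trace_mul_comm]
      refine congrArg Matrix.trace ?_
      rw [← hS]; noncomm_ring
    have h2 : (𝓛 * E j - E j * L) * ρ * ((E j)ᴴ * 𝓛 - L * (E j)ᴴ)
        = 𝓛 * (E j * ρ * (E j)ᴴ) * 𝓛 - 𝓛 * (E j * (ρ * L) * (E j)ᴴ)
          - (E j * (L * ρ) * (E j)ᴴ) * 𝓛 + E j * (L * (ρ * L)) * (E j)ᴴ := by
      noncomm_ring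
    have t1 : (𝓛 * (E j * ρ * (E j)ᴴ) * 𝓛).trace = (𝓛 * 𝓛 * (E j * ρ * (E j)ᴴ)).trace := by
      rw [trace_mul_comm]; refine congrArg Matrix.trace ?_; noncomm_ring
    have t3 : ((E j * (L * ρ) * (E j)ᴴ) * 𝓛).trace = (𝓛 * (E j * (L * ρ) * (E j)ᴴ)).trace :=
      trace_mul_comm _ _
    have t4 : (E j * (L * (ρ * L)) * (E j)ᴴ).trace = ((E j)ᴴ * E j * (L * (ρ * L))).trace :=
      trace_mul_cycle _ _ _
    rw [h1, h2, trace_add, trace_sub, trace_sub, t1, t3, t4]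
  have hsum : ∑ j, (((𝓛 * E j - E j * L) * S)ᴴ * ((𝓛 * E j - E j * L) * S)).trace
      = ((∑ j, (𝓛 * 𝓛 * (E j * ρ * (E j)ᴴ)).trace
          - ∑ j, (𝓛 * (E j * (ρ * L) * (E j)ᴴ)).trace)
          - ∑ j, (𝓛 * (E j * (L * ρ) * (E j)ᴴ)).trace)
        + ∑ j, ((E j)ᴴ * E j * (L * (ρ * L))).trace := by
    rw [Finset.sum_congr rfl fun j _ => key j]
    rw [Finset.sum_add_distrib, Finset.sum_sub_distrib, Finset.sum_sub_distrib]
  have A1 : ∑ j, (𝓛 * 𝓛 * (E j * ρ * (E j)ᴴ)).trace = (σ * 𝓛 ^ 2).trace := by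
    rw [← trace_sum, ← Finset.mul_sum, ← hσ, trace_mul_comm]
    congr 1; rw [pow_two]
  have A4 : ∑ j, ((E j)ᴴ * E j * (L * (ρ * L))).trace = (ρ * L ^ 2).trace := by
    rw [← trace_sum, ← Finset.sum_mul, hKraus, one_mul, trace_mul_comm]
    congr 1; noncomm_ring
  have A23 : ∑ j, (𝓛 * (E j * (L * ρ) * (E j)ᴴ)).trace
      + ∑ j, (𝓛 * (E j * (ρ * L) * (E j)ᴴ)).trace = 2 * (σ * 𝓛 ^ 2).trace := by
    rw [← Finset.sum_add_distrib]
    simp only [← trace_add, ← mul_add]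
    rw [← trace_sum, ← Finset.mul_sum]
    have hmat : ∑ j, (E j * (L * ρ) * (E j)ᴴ + E j * (ρ * L) * (E j)ᴴ) = 𝓛 * σ + σ * 𝓛 := by
      rw [← hSLDout]
      exact Finset.sum_congr rfl fun j _ => by noncomm_ring
    rw [hmat, mul_add, trace_add]
    have e1 : (𝓛 * (𝓛 * σ)).trace = (σ * 𝓛 ^ 2).trace := by
      rw [← mul_assoc, trace_mul_comm]; congr 1; rw [pow_two]
    have e2 : (𝓛 * (σ * 𝓛)).trace = (σ * 𝓛 ^ 2).trace := by
      rw [trace_mul_comm, mul_assoc]; congr 1; rw [pow_two]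
    rw [e1, e2]; ring
  have main : (ρ * L ^ 2).trace - (σ * 𝓛 ^ 2).trace
      = ∑ j, (((𝓛 * E j - E j * L) * S)ᴴ * ((𝓛 * E j - E j * L) * S)).trace := by
    rw [hsum, A1, A4]
    linear_combination A23
  have hre : (ρ * L ^ 2).trace.re - (σ * 𝓛 ^ 2).trace.re
      = ∑ j, ∑ i, ∑ k, Complex.normSq (((𝓛 * E j - E j * L) * S) k i) := by
    rw [← Complex.sub_re, main]
    simp only [hval]
    rw [Complex.re_sum]
    simp
  have hRnn : ∀ j : ι, 0 ≤ ∑ i, ∑ k, Complex.normSq (((𝓛 * E j - E j * L) * S) k i) :=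
    fun j => Finset.sum_nonneg fun i _ =>
      Finset.sum_nonneg fun k _ => Complex.normSq_nonneg _
  have hnn : 0 ≤ ∑ j, ∑ i, ∑ k, Complex.normSq (((𝓛 * E j - E j * L) * S) k i) :=
    Finset.sum_nonneg fun j _ => hRnn j
  have hchar : ∀ j, (∑ i, ∑ k, Complex.normSq (((𝓛 * E j - E j * L) * S) k i)) = 0
      ↔ 𝓛 * E j * S = E j * L * S := by
    intro j
    constructor
    · intro h
      have h' := (Finset.sum_eq_zero_iff_of_nonneg (fun i _ =>
        Finset.sum_nonneg fun k _ => Complex.normSq_nonneg _)).1 h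
      have hz : (𝓛 * E j - E j * L) * S = 0 := by
        ext k i
        have h2 := (Finset.sum_eq_zero_iff_of_nonneg (fun k _ =>
          Complex.normSq_nonneg _)).1 (h' i (Finset.mem_univ i)) k (Finset.mem_univ k)
        simpa [Complex.normSq_eq_zero] using h2
      have hz' : 𝓛 * E j * S - E j * L * S = 0 := by rw [← sub_mul]; exact hz
      exact sub_eq_zero.mp hz'
    · intro h
      have hz : (𝓛 * E j - E j * L) * S = 0 := by
        rw [sub_mul, h, sub_self]
      apply Finset.sum_eq_zero; intro i _
      apply Finset.sum_eq_zero; intro k _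
      rw [hz]; simp
  refine ⟨main, by linarith [hre ▸ hnn], ?_, ?_⟩
  · intro heq j
    have h0 : ∑ j, ∑ i, ∑ k, Complex.normSq (((𝓛 * E j - E j * L) * S) k i) = 0 := by
      rw [← hre, heq, sub_self]
    exact (hchar j).1 ((Finset.sum_eq_zero_iff_of_nonneg fun j _ => hRnn j).1 h0 j
      (Finset.mem_univ j))
  · intro h
    have h0 : ∑ j, ∑ i, ∑ k, Complex.normSq (((𝓛 * E j - E j * L) * S) k i) = 0 :=
      Finset.sum_eq_zero fun j _ => (hchar j).2 (h j)
    linarith [hre.trans h0]
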